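/- Let n ≥ 2 and let O_n be the monoid of order-preserving transformations of {1,…,n}, viewed as a submonoid of PP_n^fd. Then: (1) (D_n, O_n) is a strong right action pair in PP_n^fd, i.e. (A1) D_n f ⊆ f D_n for all f ∈ O_n, and (A2) for u,v ∈ D_n and f,g ∈ O_n, fu = gv implies u = v; (2) PP_n^fd = O_n D_n, i.e. every a ∈ PP_n^fd factors as a = f d_η for some f ∈ O_n and some planar equivalence η (indeed with η = coker(a)). -/

import Mathlib

open scoped Classical

namespace PaperFDP

/-- Vertex set of a partition diagram: `inl x` is the upper vertex `x`,
`inr x` is the lower vertex `x'`. -/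
abbrev V (n : ℕ) := Fin n ⊕ Fin n

/-- A partition in `P_n`: a set partition of the `2n` points, encoded as an
equivalence relation (a `Setoid`). -/
abbrev Ptn (n : ℕ) := Setoid (V n)

/-- Three-row vertex set (upper ⊕ (middle ⊕ lower)) used for the product graph. -/
abbrev W3 (n : ℕ) := Fin n ⊕ (Fin n ⊕ Fin n)

/-- Embedding of `a`'s vertices: upper row stays, lower row goes to the middle row. -/
def upMid {n : ℕ} : V n → W3 n :=
  Sum.elim Sum.inl fun x => Sum.inr (Sum.inl x)

/-- Embedding of `b`'s vertices: upper row goes to the middle row, lower row stays. -/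
def midLow {n : ℕ} : V n → W3 n :=
  Sum.elim (fun x => Sum.inr (Sum.inl x)) fun x => Sum.inr (Sum.inr x)

/-- Embedding of the outer (upper and lower) rows into the three-row vertex set. -/
def outer {n : ℕ} : V n → W3 n :=
  Sum.elim Sum.inl fun x => Sum.inr (Sum.inr x)

/-- The edge relation of the product graph `Π(a,b)`. -/
def joinRel {n : ℕ} (a b : Ptn n) (u v : W3 n) : Prop :=
  (∃ p q : V n, a.r p q ∧ upMid p = u ∧ upMid q = v) ∨
  (∃ p q : V n, b.r p q ∧ midLow p = u ∧ midLow q = v)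

/-- The product of two partitions: `x,y` lie in the same block of `a*b` iff they are
connected in the product graph. -/
def pmul {n : ℕ} (a b : Ptn n) : Ptn n :=
  Setoid.comap outer (Relation.EqvGen.setoid (joinRel a b))

/-- The identity partition, with blocks `{x, x'}`. -/
def onePtn (n : ℕ) : Ptn n := Setoid.ker (Sum.elim id id)

/-- The partition of a transformation `f` (written on the right): `x` is joined to `(x f)'`. -/
def toPtn {n : ℕ} (f : Fin n → Fin n) : Ptn n := Setoid.ker (Sum.elim f id)

/-- `id_ε`, the partition with blocks `A ∪ A'` for the `ε`-classes `A`. -/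
def idOf {n : ℕ} (ε : Setoid (Fin n)) : Ptn n := Setoid.comap (Sum.elim id id) ε

/-- The kernel of a partition. -/
def kerP {n : ℕ} (a : Ptn n) : Setoid (Fin n) := Setoid.comap Sum.inl a

/-- The cokernel of a partition. -/
def cokerP {n : ℕ} (a : Ptn n) : Setoid (Fin n) := Setoid.comap Sum.inr a

/-- `a` has full domain: every upper point is in a block meeting the lower row. -/
def FullDom {n : ℕ} (a : Ptn n) : Prop :=
  ∀ x : Fin n, ∃ y : Fin n, a.r (Sum.inl x) (Sum.inr y)

/-- The full-domain partition monoid `P_n^fd` as a subset of `P_n`. -/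
def Pfd (n : ℕ) : Set (Ptn n) := {a | FullDom a}

/-- `a` is (the partition of) a permutation, i.e. a unit of `P_n`. -/
def IsPermPtn {n : ℕ} (a : Ptn n) : Prop := ∃ g : Equiv.Perm (Fin n), a = toPtn ⇑g

/-- The singular ideal `Sing(P_n^fd) = P_n^fd ∖ S_n`. -/
def SingPfd (n : ℕ) : Set (Ptn n) := {a | FullDom a ∧ ¬ IsPermPtn a}

/-- The boundary linear order on the `2n` vertices: `1 < … < n < n' < … < 1'`. -/
def ordV {n : ℕ} : V n → ℕ :=
  Sum.elim (fun x => (x : ℕ)) fun x => 2 * n - 1 - (x : ℕ)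

/-- `a` is planar: it can be drawn without crossings, equivalently it is
non-crossing with respect to the boundary order on the `2n` vertices. -/
def Planar {n : ℕ} (a : Ptn n) : Prop :=
  ∀ p q r s : V n, ordV p < ordV q → ordV q < ordV r → ordV r < ordV s →
    a.r p r → a.r q s → a.r p q

/-- The planar full-domain partition monoid `PP_n^fd` as a subset of `P_n`. -/
def PPfd (n : ℕ) : Set (Ptn n) := {a | FullDom a ∧ Planar a}

/-- `η_ij`: the equivalence on `{1,…,n}` whose only nontrivial class is `{i,j}`. -/
def etaOf {n : ℕ} (i j : Fin n) : Setoid (Fin n) :=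
  Setoid.ker fun x => if x = j then i else x

/-- `ē_ij = id_{η_ij}`: the partition with block `{i,j,i',j'}` and blocks `{x,x'}` otherwise. -/
def ebar {n : ℕ} (i j : Fin n) : Ptn n := idOf (etaOf i j)

/-- `t̄_ij`: the transformation sending `j ↦ i` and fixing everything else, as a partition. -/
def tbar {n : ℕ} (i j : Fin n) : Ptn n := toPtn fun x => if x = j then i else x

/-- Evaluation of a word as a genuine (semi)group product of partitions
(the empty word evaluates to the identity partition). -/
def evalWith {A : Type*} {n : ℕ} (g : A → Ptn n) : List A → Ptn n
  | [] => onePtn n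
  | [x] => g x
  | x :: y :: w => pmul (g x) (evalWith g (y :: w))

/-- One-step rewriting using a relation from `R`, in an arbitrary context. -/
def OneStep {A : Type*} (R : List A → List A → Prop) (w w' : List A) : Prop :=
  ∃ u v p q : List A, R p q ∧ w = u ++ p ++ v ∧ w' = u ++ q ++ v

/-- The congruence on the free monoid (or free semigroup) generated by `R`. -/
def PresCong {A : Type*} (R : List A → List A → Prop) : List A → List A → Prop :=
  Relation.EqvGen (OneStep R)

end PaperFDP

namespace PaperFDP

/-- The `ε`-class of `x`, as a set. -/
def clsS {n : ℕ} (ε : Setoid (Fin n)) (x : Fin n) : Set (Fin n) := {y | ε.r x y}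

/-- Two sets are separated if one lies entirely below the other. -/
def SepSets {n : ℕ} (A B : Set (Fin n)) : Prop :=
  (∀ a ∈ A, ∀ b ∈ B, a < b) ∨ (∀ a ∈ A, ∀ b ∈ B, b < a)

/-- `A` is nested by `B`: all of `A` lies strictly between two consecutive elements of `B`. -/
def NestedBy {n : ℕ} (A B : Set (Fin n)) : Prop :=
  ∃ b₁ ∈ B, ∃ b₂ ∈ B, b₁ < b₂ ∧ (∀ b ∈ B, ¬ (b₁ < b ∧ b < b₂)) ∧
    ∀ a ∈ A, b₁ < a ∧ a < b₂

/-- An equivalence is planar if any two of its classes are nested or separated. -/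
def IsPlanarEq {n : ℕ} (ε : Setoid (Fin n)) : Prop :=
  ∀ x y : Fin n, ¬ ε.r x y →
    SepSets (clsS ε x) (clsS ε y) ∨ NestedBy (clsS ε x) (clsS ε y) ∨
      NestedBy (clsS ε y) (clsS ε x)

/-- The class of `x` is un-nested (nested by no other class). -/
def Unnested {n : ℕ} (ε : Setoid (Fin n)) (x : Fin n) : Prop :=
  ∀ y : Fin n, ¬ NestedBy (clsS ε x) (clsS ε y)

/-- The minimum of the `ε`-class of `x`. -/
noncomputable def minCl {n : ℕ} (ε : Setoid (Fin n)) (x : Fin n) : Fin n :=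
  (Finset.univ.filter fun y => ε.r x y).min'
    ⟨x, Finset.mem_filter.mpr ⟨Finset.mem_univ x, ε.iseqv.refl x⟩⟩

/-- The maximum of the `ε`-class of `x`. -/
noncomputable def maxCl {n : ℕ} (ε : Setoid (Fin n)) (x : Fin n) : Fin n :=
  (Finset.univ.filter fun y => ε.r x y).max'
    ⟨x, Finset.mem_filter.mpr ⟨Finset.mem_univ x, ε.iseqv.refl x⟩⟩

/-- The minima of the un-nested `ε`-classes. -/
noncomputable def anchorsF {n : ℕ} (ε : Setoid (Fin n)) : Finset (Fin n) :=
  Finset.univ.filter fun y => Unnested ε y ∧ minCl ε y = y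

/-- The largest minimum-of-an-un-nested-class that is `≤ x`.  (For a planar
equivalence this always exists; junk default otherwise.) -/
noncomputable def anchorBelow {n : ℕ} [NeZero n] (ε : Setoid (Fin n)) (x : Fin n) : Fin n :=
  if h : ((anchorsF ε).filter (· ≤ x)).Nonempty then ((anchorsF ε).filter (· ≤ x)).max' h
  else 0

/-- The "block" map defining `d_η`: an upper vertex `x` goes to the interval
`A_i = [min B_i, max B_i]` (of the un-nested class `B_i`) containing it; a lower
vertex `x'` goes to the `η`-class of `x`.  Blocks are labelled by the minimum of
the corresponding un-nested class, resp. class. -/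
noncomputable def dMap {n : ℕ} [NeZero n] (ε : Setoid (Fin n)) : V n → Fin n :=
  Sum.elim (fun x => anchorBelow ε x) fun x => minCl ε x

/-- The partition `d_η ∈ PP_n^fd`, with blocks `A_i ∪ B_i'` for the un-nested
`η`-classes `B_i` (where `A_i = [min B_i, max B_i]`), and `C'` for the nested
`η`-classes `C`. -/
noncomputable def dEta {n : ℕ} [NeZero n] (ε : Setoid (Fin n)) : Ptn n :=
  Setoid.ker (dMap ε)

/-- `h̄_ij = d_{η_ij}`. -/
noncomputable def hbar {n : ℕ} [NeZero n] (i j : Fin n) : Ptn n := dEta (etaOf i j)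

/-- The monoid `D_n = {d_η : η a planar equivalence}`, as a subset of `PP_n^fd`. -/
def DSet (n : ℕ) [NeZero n] : Set (Ptn n) :=
  {a | ∃ ε : Setoid (Fin n), IsPlanarEq ε ∧ a = dEta ε}

end PaperFDP

namespace PaperFDP

open Relation

variable {n : ℕ}

/-! ### Basic facts about `minCl`, `maxCl`, `clsS` -/

lemma rel_minCl (ε : Setoid (Fin n)) (x : Fin n) : ε.r x (minCl ε x) := by
  have h := Finset.min'_mem (Finset.univ.filter fun y => ε.r x y)
    ⟨x, Finset.mem_filter.mpr ⟨Finset.mem_univ x, ε.iseqv.refl x⟩⟩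
  exact (Finset.mem_filter.mp h).2

lemma rel_maxCl (ε : Setoid (Fin n)) (x : Fin n) : ε.r x (maxCl ε x) := by
  have h := Finset.max'_mem (Finset.univ.filter fun y => ε.r x y)
    ⟨x, Finset.mem_filter.mpr ⟨Finset.mem_univ x, ε.iseqv.refl x⟩⟩
  exact (Finset.mem_filter.mp h).2

lemma minCl_le_of_rel {ε : Setoid (Fin n)} {x y : Fin n} (h : ε.r x y) : minCl ε x ≤ y :=
  Finset.min'_le _ y (Finset.mem_filter.mpr ⟨Finset.mem_univ y, h⟩)

lemma le_maxCl_of_rel {ε : Setoid (Fin n)} {x y : Fin n} (h : ε.r x y) : y ≤ maxCl ε x :=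
  Finset.le_max' _ y (Finset.mem_filter.mpr ⟨Finset.mem_univ y, h⟩)

lemma minCl_le (ε : Setoid (Fin n)) (x : Fin n) : minCl ε x ≤ x :=
  minCl_le_of_rel (ε.iseqv.refl x)

lemma le_maxCl (ε : Setoid (Fin n)) (x : Fin n) : x ≤ maxCl ε x :=
  le_maxCl_of_rel (ε.iseqv.refl x)

lemma minCl_congr {ε : Setoid (Fin n)} {x y : Fin n} (h : ε.r x y) : minCl ε x = minCl ε y := by
  unfold minCl
  congr 1
  ext z
  simp only [Finset.mem_filter, Finset.mem_univ, true_and]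
  exact ⟨fun hz => ε.trans (ε.symm h) hz, fun hz => ε.trans h hz⟩

lemma maxCl_congr {ε : Setoid (Fin n)} {x y : Fin n} (h : ε.r x y) : maxCl ε x = maxCl ε y := by
  unfold maxCl
  congr 1
  ext z
  simp only [Finset.mem_filter, Finset.mem_univ, true_and]
  exact ⟨fun hz => ε.trans (ε.symm h) hz, fun hz => ε.trans h hz⟩

lemma minCl_eq_iff {ε : Setoid (Fin n)} {x y : Fin n} :
    minCl ε x = minCl ε y ↔ ε.r x y := by
  constructor
  · intro h
    exact ε.trans (rel_minCl ε x) (ε.trans (h ▸ ε.refl _) (ε.symm (rel_minCl ε y)))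
  · exact minCl_congr

lemma minCl_idem (ε : Setoid (Fin n)) (x : Fin n) :
    minCl ε (minCl ε x) = minCl ε x :=
  minCl_congr (ε.symm (rel_minCl ε x))

lemma mem_clsS {ε : Setoid (Fin n)} {x y : Fin n} : y ∈ clsS ε x ↔ ε.r x y := Iff.rfl

lemma clsS_congr {ε : Setoid (Fin n)} {x y : Fin n} (h : ε.r x y) : clsS ε x = clsS ε y := by
  ext z
  exact ⟨fun hz => ε.trans (ε.symm h) hz, fun hz => ε.trans h hz⟩

lemma unnested_congr {ε : Setoid (Fin n)} {x y : Fin n} (h : ε.r x y) (hu : Unnested ε x) :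
    Unnested ε y := by
  intro t ht
  exact hu t (by rwa [clsS_congr h])

/-! ### Noncrossing equivalences -/

/-- Noncrossing property of an equivalence on `Fin n`. -/
def NCr (η : Setoid (Fin n)) : Prop :=
  ∀ ⦃a b c d : Fin n⦄, a < b → b < c → c < d → η.r a c → η.r b d → η.r a b

lemma ncr_of_planarEq {η : Setoid (Fin n)} (hpl : IsPlanarEq η) : NCr η := by
  intro a b c d hab hbc hcd hac hbd
  by_contra hnab
  rcases hpl a b hnab with hsep | hnest | hnest
  · rcases hsep with h | h
    · exact absurd (h c hac b (η.iseqv.refl b)) (not_lt.mpr (le_of_lt hbc))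
    · exact absurd (h a (η.iseqv.refl a) b (η.iseqv.refl b)) (not_lt.mpr (le_of_lt hab))
  · obtain ⟨b₁, hb₁, b₂, hb₂, hlt, hcons, hall⟩ := hnest
    have h1 := hall a (η.iseqv.refl a)
    have h3 := hall c hac
    exact hcons b (η.iseqv.refl b) ⟨lt_trans h1.1 hab, lt_trans hbc h3.2⟩
  · obtain ⟨c₁, hc₁, c₂, hc₂, hlt, hcons, hall⟩ := hnest
    have h2 := hall b (η.iseqv.refl b)
    have h4 := hall d hbd
    exact hcons c hac ⟨lt_trans h2.1 hbc, lt_trans hcd h4.2⟩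


section PlanarNC

variable {η : Setoid (Fin n)}

/-- Auxiliary: noncrossing classes whose minima are ordered are separated or nested. -/
lemma planarEq_aux (hnc : NCr η) {x y : Fin n} (hxy : ¬ η.r x y)
    (hm : minCl η x < minCl η y) :
    SepSets (clsS η x) (clsS η y) ∨ NestedBy (clsS η y) (clsS η x) := by
  have hdisj : ∀ c, η.r x c → η.r y c → False := fun c h1 h2 =>
    hxy (η.iseqv.trans h1 (η.iseqv.symm h2))
  rcases lt_or_ge (maxCl η x) (minCl η y) with hMX | hMX
  · -- separated
    left; left
    intro a ha b hb
    exact lt_of_le_of_lt (le_maxCl_of_rel ha) (lt_of_lt_of_le hMX (minCl_le_of_rel hb))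
  · -- minCl y ≤ maxCl x
    have hne1 : minCl η y ≠ maxCl η x := by
      intro h
      exact hdisj _ (h ▸ rel_maxCl η x) (rel_minCl η y)
    have hmyMX : minCl η y < maxCl η x := lt_of_le_of_ne hMX hne1
    rcases lt_trichotomy (maxCl η x) (maxCl η y) with hM | hM | hM
    · -- crossing: contradiction
      exfalso
      have h1 : η.r (minCl η x) (maxCl η x) :=
        η.iseqv.trans (η.iseqv.symm (rel_minCl η x)) (rel_maxCl η x)
      have h2 : η.r (minCl η y) (maxCl η y) :=
        η.iseqv.trans (η.iseqv.symm (rel_minCl η y)) (rel_maxCl η y)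
      have := hnc hm hmyMX hM h1 h2
      exact hdisj _ (η.iseqv.trans (rel_minCl η x) this) (rel_minCl η y)
    · exact absurd hM (fun h => hdisj _ (h ▸ rel_maxCl η x) (rel_maxCl η y))
    · -- maxCl y < maxCl x : nested
      right
      have hnomid : ∀ c, η.r x c → ¬ (minCl η y ≤ c ∧ c ≤ maxCl η y) := by
        rintro c hc ⟨h1, h2⟩
        have hne2 : minCl η y ≠ c := fun h => hdisj c hc (h ▸ rel_minCl η y)
        have hne3 : c ≠ maxCl η y := fun h => hdisj c hc (h ▸ rel_maxCl η y)
        have h1' : minCl η y < c := lt_of_le_of_ne h1 hne2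
        have h2' : c < maxCl η y := lt_of_le_of_ne h2 hne3
        have h3 : η.r (minCl η x) c := η.iseqv.trans (η.iseqv.symm (rel_minCl η x)) hc
        have h4 : η.r (minCl η y) (maxCl η y) :=
          η.iseqv.trans (η.iseqv.symm (rel_minCl η y)) (rel_maxCl η y)
        have := hnc hm h1' h2' h3 h4
        exact hdisj _ (η.iseqv.trans (rel_minCl η x) this) (rel_minCl η y)
      -- b₁ : largest element of cls x below minCl y; b₂ : smallest above maxCl y
      have hne4 : ((Finset.univ.filter fun z => η.r x z).filter (· < minCl η y)).Nonempty :=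
        ⟨minCl η x, by
          simp only [Finset.mem_filter, Finset.mem_univ, true_and]
          exact ⟨rel_minCl η x, hm⟩⟩
      have hne5 : ((Finset.univ.filter fun z => η.r x z).filter (fun c => maxCl η y < c)).Nonempty :=
        ⟨maxCl η x, by
          simp only [Finset.mem_filter, Finset.mem_univ, true_and]
          exact ⟨rel_maxCl η x, hM⟩⟩
      set b₁ := (((Finset.univ.filter fun z => η.r x z)).filter (· < minCl η y)).max' hne4 with hb₁def
      set b₂ := (((Finset.univ.filter fun z => η.r x z)).filter (fun c => maxCl η y < c)).min' hne5 with hb₂def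
      have hb₁mem := Finset.max'_mem _ hne4
      have hb₂mem := Finset.min'_mem _ hne5
      simp only [Finset.mem_filter, Finset.mem_univ, true_and] at hb₁mem hb₂mem
      refine ⟨b₁, hb₁mem.1, b₂, hb₂mem.1, ?_, ?_, ?_⟩
      · exact lt_trans (lt_of_lt_of_le hb₁mem.2 (le_trans (minCl_le η y) (le_maxCl η y))) hb₂mem.2
      · rintro b hb ⟨h1, h2⟩
        rcases lt_or_ge b (minCl η y) with h3 | h3
        · exact absurd (Finset.le_max' _ b (by
            simp only [Finset.mem_filter, Finset.mem_univ, true_and]; exact ⟨hb, h3⟩)) (not_le.mpr h1)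
        rcases le_or_gt b (maxCl η y) with h4 | h4
        · exact hnomid b hb ⟨h3, h4⟩
        · exact absurd (Finset.min'_le _ b (by
            simp only [Finset.mem_filter, Finset.mem_univ, true_and]; exact ⟨hb, h4⟩)) (not_le.mpr h2)
      · intro a ha
        exact ⟨lt_of_lt_of_le hb₁mem.2 (minCl_le_of_rel ha),
          lt_of_le_of_lt (le_maxCl_of_rel ha) hb₂mem.2⟩

lemma sepSets_comm {A B : Set (Fin n)} (h : SepSets A B) : SepSets B A := by
  rcases h with h | h
  · exact Or.inr (fun b hb a ha => h a ha b hb)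
  · exact Or.inl (fun b hb a ha => h a ha b hb)

lemma planarEq_of_ncr (hnc : NCr η) : IsPlanarEq η := by
  intro x y hxy
  rcases lt_trichotomy (minCl η x) (minCl η y) with h | h | h
  · rcases planarEq_aux hnc hxy h with h' | h'
    · exact Or.inl h'
    · exact Or.inr (Or.inr h')
  · exact absurd (minCl_eq_iff.mp h) hxy
  · rcases planarEq_aux hnc (fun hh => hxy (η.iseqv.symm hh)) h with h' | h'
    · exact Or.inl (sepSets_comm h')
    · exact Or.inr (Or.inl h')

end PlanarNC



section Anchors

variable [NeZero n] {ε : Setoid (Fin n)}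

lemma mem_anchorsF {c : Fin n} :
    c ∈ anchorsF ε ↔ Unnested ε c ∧ minCl ε c = c := by
  simp [anchorsF]

lemma sep_of_unnested (hpl : IsPlanarEq ε) {u v : Fin n} (hu : Unnested ε u)
    (hv : Unnested ε v) (huv : ¬ ε.r u v) : SepSets (clsS ε u) (clsS ε v) := by
  rcases hpl u v huv with h | h | h
  · exact h
  · exact absurd h (hu v)
  · exact absurd h (hv u)

lemma hullCover (hpl : IsPlanarEq ε) (x : Fin n) :
    ∃ c ∈ anchorsF ε, c ≤ minCl ε x ∧ maxCl ε x ≤ maxCl ε c := by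
  suffices H : ∀ m : ℕ, ∀ x : Fin n, n ≤ ((maxCl ε x).val - (minCl ε x).val) + m →
      ∃ c ∈ anchorsF ε, c ≤ minCl ε x ∧ maxCl ε x ≤ maxCl ε c by
    exact H n x (by omega)
  intro m
  induction m with
  | zero =>
    intro x hx
    have h1 : (maxCl ε x).val < n := (maxCl ε x).isLt
    omega
  | succ m IH =>
    intro x hx
    by_cases hU : Unnested ε x
    · refine ⟨minCl ε x, mem_anchorsF.mpr ⟨unnested_congr (rel_minCl ε x) hU, minCl_idem ε x⟩,
        le_refl _, le_of_eq (maxCl_congr (rel_minCl ε x))⟩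
    · rw [Unnested] at hU
      push_neg at hU
      obtain ⟨y, hy⟩ := hU
      obtain ⟨b₁, hb₁, b₂, hb₂, hlt, hcons, hall⟩ := hy
      have h1 : minCl ε y ≤ b₁ := minCl_le_of_rel hb₁
      have h2 : b₂ ≤ maxCl ε y := le_maxCl_of_rel hb₂
      have h3 : b₁ < minCl ε x := (hall (minCl ε x) (rel_minCl ε x)).1
      have h4 : maxCl ε x < b₂ := (hall (maxCl ε x) (rel_maxCl ε x)).2
      have h5 : minCl ε x ≤ maxCl ε x :=
        le_trans (minCl_le ε x) (le_maxCl ε x)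
      obtain ⟨c, hc, hc1, hc2⟩ := IH y (by
        have : (minCl ε y).val ≤ (b₁ : ℕ) := h1
        have : (b₂ : ℕ) ≤ (maxCl ε y).val := h2
        have : (b₁ : ℕ) < (minCl ε x).val := h3
        have : (maxCl ε x).val < (b₂ : ℕ) := h4
        have : (minCl ε x).val ≤ (maxCl ε x).val := h5
        omega)
      exact ⟨c, hc, le_trans hc1 (le_trans h1 (le_of_lt h3)),
        le_trans (le_of_lt h4) (le_trans h2 hc2)⟩

lemma anchorBelow_of_max {z : Fin n} (hne : ((anchorsF ε).filter (· ≤ z)).Nonempty) :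
    anchorBelow ε z = ((anchorsF ε).filter (· ≤ z)).max' hne := dif_pos hne

lemma anchorBelow_eq (hpl : IsPlanarEq ε) {c z : Fin n} (hc : c ∈ anchorsF ε)
    (h1 : c ≤ z) (h2 : z ≤ maxCl ε c) : anchorBelow ε z = c := by
  have hcmem : c ∈ (anchorsF ε).filter (· ≤ z) := Finset.mem_filter.mpr ⟨hc, h1⟩
  have hne : ((anchorsF ε).filter (· ≤ z)).Nonempty := ⟨c, hcmem⟩
  rw [anchorBelow_of_max (z := z) hne]
  set d := ((anchorsF ε).filter (· ≤ z)).max' hne with hd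
  have hmem : d ∈ (anchorsF ε).filter (· ≤ z) := Finset.max'_mem _ hne
  rw [Finset.mem_filter] at hmem
  have hcd : c ≤ d := Finset.le_max' _ c hcmem
  rcases eq_or_lt_of_le hcd with h | h
  · exact h.symm
  · exfalso
    have hdA := mem_anchorsF.mp hmem.1
    have hcA := mem_anchorsF.mp hc
    have hnrel : ¬ ε.r c d := by
      intro hrel
      have := minCl_congr hrel
      rw [hcA.2, hdA.2] at this
      exact absurd this (ne_of_lt h)
    rcases sep_of_unnested hpl hcA.1 hdA.1 hnrel with hs | hs
    · have := hs (maxCl ε c) (rel_maxCl ε c) d (ε.iseqv.refl d)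
      exact absurd (le_trans hmem.2 h2) (not_le.mpr this)
    · exact absurd (hs c (ε.iseqv.refl c) d (ε.iseqv.refl d)) (not_lt.mpr (le_of_lt h))

lemma anchor_spec (hpl : IsPlanarEq ε) (x : Fin n) :
    anchorBelow ε x ∈ anchorsF ε ∧ anchorBelow ε x ≤ x ∧ x ≤ maxCl ε (anchorBelow ε x) := by
  obtain ⟨c, hc, hc1, hc2⟩ := hullCover hpl x
  have h1 : c ≤ x := le_trans hc1 (minCl_le ε x)
  have h2 : x ≤ maxCl ε c := le_trans (le_maxCl ε x) hc2
  rw [anchorBelow_eq hpl hc h1 h2]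
  exact ⟨hc, h1, h2⟩

end Anchors



section Products

open Relation

lemma pmul_rel_iff {a b : Ptn n} {u v : V n} :
    (pmul a b).r u v ↔ EqvGen (joinRel a b) (outer u) (outer v) := Iff.rfl

lemma edgeA {a b : Ptn n} {p q : V n} (h : a.r p q) :
    EqvGen (joinRel a b) (upMid p) (upMid q) :=
  EqvGen.rel _ _ (Or.inl ⟨p, q, h, rfl, rfl⟩)

lemma edgeB {a b : Ptn n} {p q : V n} (h : b.r p q) :
    EqvGen (joinRel a b) (midLow p) (midLow q) :=
  EqvGen.rel _ _ (Or.inr ⟨p, q, h, rfl, rfl⟩)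

lemma pmul_inv {a b : Ptn n} {β : Sort*} {I : W3 n → β}
    (hA : ∀ p q : V n, a.r p q → I (upMid p) = I (upMid q))
    (hB : ∀ p q : V n, b.r p q → I (midLow p) = I (midLow q)) :
    ∀ {u v : W3 n}, EqvGen (joinRel a b) u v → I u = I v := by
  intro u v h
  induction h with
  | rel x y hxy =>
    rcases hxy with ⟨p, q, hpq, hp, hq⟩ | ⟨p, q, hpq, hp, hq⟩
    · exact hp ▸ hq ▸ hA p q hpq
    · exact hp ▸ hq ▸ hB p q hpq
  | refl x => rfl
  | symm x y _ ih => exact ih.symm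
  | trans x y z _ _ ih1 ih2 => exact ih1.trans ih2

/-- The key product formula: `f · d_ε` is the kernel partition of
`anchorBelow ε ∘ f` on the top row and `minCl ε` on the bottom row. -/
lemma pmul_toPtn_dEta [NeZero n] (f : Fin n → Fin n) (ε : Setoid (Fin n)) :
    pmul (toPtn f) (dEta ε) =
      Setoid.ker (Sum.elim (fun x => anchorBelow ε (f x)) (minCl ε)) := by
  apply Setoid.ext
  intro u v
  constructor
  · intro h
    have key := pmul_inv (a := toPtn f) (b := dEta ε)
      (I := Sum.elim (fun x => anchorBelow ε (f x)) (Sum.elim (fun m => anchorBelow ε m) (fun y => minCl ε y)))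
      (fun p q hpq => by
        have e : ∀ p : V n, (Sum.elim (fun x => anchorBelow ε (f x))
            (Sum.elim (fun m => anchorBelow ε m) (fun y => minCl ε y))) (upMid p)
            = anchorBelow ε (Sum.elim f id p) := by rintro (x | m) <;> rfl
        rw [e, e, show (Sum.elim f id p : Fin n) = Sum.elim f id q from hpq])
      (fun p q hpq => by
        have e : ∀ p : V n, (Sum.elim (fun x => anchorBelow ε (f x))
            (Sum.elim (fun m => anchorBelow ε m) (fun y => minCl ε y))) (midLow p)
            = dMap ε p := by rintro (m | y) <;> rfl
        rw [e, e, show (dMap ε p : Fin n) = dMap ε q from hpq]) h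
    rcases u with x | y <;> rcases v with x' | y' <;> exact key
  · intro h
    rcases u with x | y <;> rcases v with x' | y'
    · -- top-top
      have h1 : EqvGen (joinRel (toPtn f) (dEta ε)) (upMid (Sum.inl x)) (upMid (Sum.inr (f x))) :=
        edgeA (show (Sum.elim f id (Sum.inl x) : Fin n) = Sum.elim f id (Sum.inr (f x)) from rfl)
      have h2 : EqvGen (joinRel (toPtn f) (dEta ε)) (upMid (Sum.inl x')) (upMid (Sum.inr (f x'))) :=
        edgeA (show (Sum.elim f id (Sum.inl x') : Fin n) = Sum.elim f id (Sum.inr (f x')) from rfl)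
      have h3 : EqvGen (joinRel (toPtn f) (dEta ε))
          (midLow (Sum.inl (f x))) (midLow (Sum.inl (f x'))) :=
        edgeB (show (dMap ε (Sum.inl (f x)) : Fin n) = dMap ε (Sum.inl (f x')) from h)
      exact (h1.trans _ _ _ h3).trans _ _ _ (h2.symm _ _)
    · -- top-bottom
      have h1 : EqvGen (joinRel (toPtn f) (dEta ε)) (upMid (Sum.inl x)) (upMid (Sum.inr (f x))) :=
        edgeA (show (Sum.elim f id (Sum.inl x) : Fin n) = Sum.elim f id (Sum.inr (f x)) from rfl)
      have h3 : EqvGen (joinRel (toPtn f) (dEta ε))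
          (midLow (Sum.inl (f x))) (midLow (Sum.inr y')) :=
        edgeB (show (dMap ε (Sum.inl (f x)) : Fin n) = dMap ε (Sum.inr y') from h)
      exact h1.trans _ _ _ h3
    · -- bottom-top
      have h1 : EqvGen (joinRel (toPtn f) (dEta ε)) (upMid (Sum.inl x')) (upMid (Sum.inr (f x'))) :=
        edgeA (show (Sum.elim f id (Sum.inl x') : Fin n) = Sum.elim f id (Sum.inr (f x')) from rfl)
      have h3 : EqvGen (joinRel (toPtn f) (dEta ε))
          (midLow (Sum.inl (f x'))) (midLow (Sum.inr y)) :=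
        edgeB (show (dMap ε (Sum.inl (f x')) : Fin n) = dMap ε (Sum.inr y) from h.symm)
      exact (h1.trans _ _ _ h3).symm _ _
    · exact edgeB (p := Sum.inr y) (q := Sum.inr y')
        (show (dMap ε (Sum.inr y) : Fin n) = dMap ε (Sum.inr y') from h)

end Products



section Push

open Relation

variable [NeZero n]

/-- One-step image relation: images of `ε`-related points under `f`. -/
def rel0 (ε : Setoid (Fin n)) (f : Fin n → Fin n) : Fin n → Fin n → Prop :=
  fun y z => ∃ p q : Fin n, ε.r p q ∧ f p = y ∧ f q = z

lemma rel0_symm {ε : Setoid (Fin n)} {f : Fin n → Fin n} : Symmetric (rel0 ε f) := by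
  rintro y z ⟨p, q, h, hp, hq⟩
  exact ⟨q, p, ε.iseqv.symm h, hq, hp⟩

/-- The pushforward of `ε` along `f`, as a setoid. -/
def epP (ε : Setoid (Fin n)) (f : Fin n → Fin n) : Setoid (Fin n) :=
  ⟨ReflTransGen (rel0 ε f),
    ⟨fun _ => ReflTransGen.refl, fun h => (@ReflTransGen.stdSymm _ (rel0 ε f) ⟨fun _ _ h => rel0_symm h⟩).symm _ _ h,
      fun h1 h2 => ReflTransGen.trans h1 h2⟩⟩

lemma epP_rel {ε : Setoid (Fin n)} {f : Fin n → Fin n} {y z : Fin n} :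
    (epP ε f).r y z ↔ ReflTransGen (rel0 ε f) y z := Iff.rfl

lemma epP_of_rel0 {ε : Setoid (Fin n)} {f : Fin n → Fin n} {y z : Fin n}
    (h : rel0 ε f y z) : (epP ε f).r y z := ReflTransGen.single h

lemma epP_of_eps {ε : Setoid (Fin n)} {f : Fin n → Fin n} {p q : Fin n}
    (h : ε.r p q) : (epP ε f).r (f p) (f q) := epP_of_rel0 ⟨p, q, h, rfl, rfl⟩

variable {ε : Setoid (Fin n)} {f : Fin n → Fin n}

/-- A single `rel0` step yields a path in the product graph of `d_ε · f`. -/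
lemma step_path {y z : Fin n} (h : rel0 ε f y z) :
    EqvGen (joinRel (dEta ε) (toPtn f)) (Sum.inr (Sum.inr y)) (Sum.inr (Sum.inr z)) := by
  obtain ⟨p, q, hpq, hp, hq⟩ := h
  have e1 : EqvGen (joinRel (dEta ε) (toPtn f)) (midLow (Sum.inr y)) (midLow (Sum.inl p)) := by
    apply edgeB
    show (Sum.elim f id (Sum.inr y) : Fin n) = Sum.elim f id (Sum.inl p)
    simp [hp]
  have e2 : EqvGen (joinRel (dEta ε) (toPtn f)) (upMid (Sum.inr p)) (upMid (Sum.inr q)) := by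
    apply edgeA
    show (dMap ε (Sum.inr p) : Fin n) = dMap ε (Sum.inr q)
    exact minCl_congr hpq
  have e3 : EqvGen (joinRel (dEta ε) (toPtn f)) (midLow (Sum.inl q)) (midLow (Sum.inr z)) := by
    apply edgeB
    show (Sum.elim f id (Sum.inl q) : Fin n) = Sum.elim f id (Sum.inr z)
    simp [hq]
  exact ((e1.trans _ _ _ e2).trans _ _ _ e3)

lemma a_rel_inr_of {y z : Fin n} (h : (epP ε f).r y z) :
    (pmul (dEta ε) (toPtn f)).r (Sum.inr y) (Sum.inr z) := by
  rw [pmul_rel_iff]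
  induction h with
  | refl => exact EqvGen.refl _
  | tail _ hstep ih => exact ih.trans _ _ _ (step_path hstep)

/-- Every upper point `x` is connected to `f(anchorBelow ε x)` in `d_ε · f`. -/
lemma a_rel_W (hpl : IsPlanarEq ε) (x : Fin n) :
    (pmul (dEta ε) (toPtn f)).r (Sum.inl x) (Sum.inr (f (anchorBelow ε x))) := by
  rw [pmul_rel_iff]
  have hA := anchor_spec hpl x
  have hmin : minCl ε (anchorBelow ε x) = anchorBelow ε x := (mem_anchorsF.mp hA.1).2
  have e1 : EqvGen (joinRel (dEta ε) (toPtn f)) (upMid (Sum.inl x))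
      (upMid (Sum.inr (anchorBelow ε x))) := by
    apply edgeA
    show (dMap ε (Sum.inl x) : Fin n) = dMap ε (Sum.inr (anchorBelow ε x))
    exact hmin.symm
  have e2 : EqvGen (joinRel (dEta ε) (toPtn f)) (midLow (Sum.inl (anchorBelow ε x)))
      (midLow (Sum.inr (f (anchorBelow ε x)))) := by
    apply edgeB
    show (Sum.elim f id (Sum.inl (anchorBelow ε x)) : Fin n)
      = Sum.elim f id (Sum.inr (f (anchorBelow ε x)))
    rfl
  exact e1.trans _ _ _ e2

/-- The cokernel of `d_ε · f` is exactly the pushforward `epP ε f`. -/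
lemma coker_dEta_toPtn (hpl : IsPlanarEq ε) :
    cokerP (pmul (dEta ε) (toPtn f)) = epP ε f := by
  apply Setoid.ext
  intro y z
  constructor
  · intro h
    have key := pmul_inv (a := dEta ε) (b := toPtn f)
      (I := Sum.elim (fun x => (Quotient.mk'' (f (anchorBelow ε x)) : Quotient (epP ε f)))
        (Sum.elim (fun m => (Quotient.mk'' (f m) : Quotient (epP ε f)))
          (fun y => (Quotient.mk'' y : Quotient (epP ε f)))))
      (fun p q hpq => by
        have e : ∀ p : V n, (Sum.elim (fun x => (Quotient.mk'' (f (anchorBelow ε x)) : Quotient (epP ε f)))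
            (Sum.elim (fun m => (Quotient.mk'' (f m) : Quotient (epP ε f)))
              (fun y => (Quotient.mk'' y : Quotient (epP ε f))))) (upMid p)
            = (Quotient.mk'' (f (dMap ε p)) : Quotient (epP ε f)) := by
          rintro (x | m)
          · rfl
          · exact Quotient.sound' (epP_of_eps (rel_minCl ε m))
        rw [e, e, show (dMap ε p : Fin n) = dMap ε q from hpq]
        )
      (fun p q hpq => by
        have e : ∀ p : V n, (Sum.elim (fun x => (Quotient.mk'' (f (anchorBelow ε x)) : Quotient (epP ε f)))
            (Sum.elim (fun m => (Quotient.mk'' (f m) : Quotient (epP ε f)))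
              (fun y => (Quotient.mk'' y : Quotient (epP ε f))))) (midLow p)
            = (Quotient.mk'' (Sum.elim f id p) : Quotient (epP ε f)) := by
          rintro (m | y) <;> rfl
        rw [e, e, show (Sum.elim f id p : Fin n) = Sum.elim f id q from hpq]) h
    exact Quotient.exact' key
  · exact a_rel_inr_of

lemma a_inl_inr_iff (hpl : IsPlanarEq ε) {x : Fin n} {y : Fin n} :
    (pmul (dEta ε) (toPtn f)).r (Sum.inl x) (Sum.inr y) ↔
      (epP ε f).r (f (anchorBelow ε x)) y := by
  constructor
  · intro h
    have h2 := (pmul (dEta ε) (toPtn f)).iseqv.trans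
      ((pmul (dEta ε) (toPtn f)).iseqv.symm (a_rel_W hpl x)) h
    rw [show ((pmul (dEta ε) (toPtn f)).r (Sum.inr (f (anchorBelow ε x))) (Sum.inr y)) =
      (cokerP (pmul (dEta ε) (toPtn f))).r (f (anchorBelow ε x)) y from rfl,
      coker_dEta_toPtn hpl] at h2
    exact h2
  · intro h
    exact (pmul (dEta ε) (toPtn f)).iseqv.trans (a_rel_W hpl x) (a_rel_inr_of h)

lemma a_inl_inl_iff (hpl : IsPlanarEq ε) {x x' : Fin n} :
    (pmul (dEta ε) (toPtn f)).r (Sum.inl x) (Sum.inl x') ↔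
      (epP ε f).r (f (anchorBelow ε x)) (f (anchorBelow ε x')) := by
  constructor
  · intro h
    exact (a_inl_inr_iff hpl).mp ((pmul (dEta ε) (toPtn f)).iseqv.trans h (a_rel_W hpl x'))
  · intro h
    exact (pmul (dEta ε) (toPtn f)).iseqv.trans ((a_inl_inr_iff hpl).mpr h)
      ((pmul (dEta ε) (toPtn f)).iseqv.symm (a_rel_W hpl x'))

end Push



section Merge

/-- Merge the classes of `i` and `j` in `s`. -/
def mergeS (s : Setoid (Fin n)) (i j : Fin n) : Setoid (Fin n) :=
  ⟨fun x y => s.r x y ∨ ((s.r x i ∨ s.r x j) ∧ (s.r y i ∨ s.r y j)), by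
    constructor
    · exact fun x => Or.inl (s.iseqv.refl x)
    · rintro x y (h | ⟨h1, h2⟩)
      · exact Or.inl (s.iseqv.symm h)
      · exact Or.inr ⟨h2, h1⟩
    · rintro x y z (h | ⟨h1, h2⟩) (h' | ⟨h1', h2'⟩)
      · exact Or.inl (s.iseqv.trans h h')
      · exact Or.inr ⟨h1'.imp (fun hh => s.iseqv.trans h hh) (fun hh => s.iseqv.trans h hh), h2'⟩
      · exact Or.inr ⟨h1, h2.imp (fun hh => s.iseqv.trans (s.iseqv.symm h') hh)
          (fun hh => s.iseqv.trans (s.iseqv.symm h') hh)⟩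
      · exact Or.inr ⟨h1, h2'⟩⟩

lemma mergeS_rel_self {s : Setoid (Fin n)} {i j x y : Fin n} (h : s.r x y) :
    (mergeS s i j).r x y := Or.inl h

lemma mergeS_rel_ij (s : Setoid (Fin n)) (i j : Fin n) : (mergeS s i j).r i j :=
  Or.inr ⟨Or.inl (s.iseqv.refl i), Or.inr (s.iseqv.refl j)⟩

/-- Merging the classes of two *adjacent* points preserves the noncrossing property. -/
lemma mergeS_ncr {s : Setoid (Fin n)} (hnc : NCr s) {i j : Fin n} (hij : i < j)
    (hadj : ∀ w : Fin n, ¬ (i < w ∧ w < j)) : NCr (mergeS s i j) := by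
  intro a b c d hab hbc hcd hac hbd
  by_contra hg
  have hnab : ¬ s.r a b := fun h => hg (Or.inl h)
  have hnP : ¬ ((s.r a i ∨ s.r a j) ∧ (s.r b i ∨ s.r b j)) := fun h => hg (Or.inr h)
  rcases hac with hac | ⟨hPa, hPc⟩
  · rcases hbd with hbd | ⟨hPb, hPd⟩
    · exact hnab (hnc hab hbc hcd hac hbd)
    · -- Case 2 : s a c, b and d in the merged class
      have hnPa : ¬ (s.r a i ∨ s.r a j) := fun h => hnP ⟨h, hPb⟩
      rcases hPb with hbi | hbj <;> rcases hPd with hdi | hdj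
      · exact hnab (hnc hab hbc hcd hac (s.iseqv.trans hbi (s.iseqv.symm hdi)))
      · -- b~i, d~j
        rcases lt_trichotomy c i with h1 | h1 | h1
        · exact hnab (hnc hab hbc h1 hac hbi)
        · exact hnPa (Or.inl (h1 ▸ hac))
        · rcases lt_trichotomy c j with h2 | h2 | h2
          · exact (hadj c ⟨h1, h2⟩).elim
          · exact hnPa (Or.inr (h2 ▸ hac))
          · rcases lt_trichotomy a j with h3 | h3 | h3
            · exact hnPa (Or.inr (hnc h3 h2 hcd hac (s.iseqv.symm hdj)))
            · exact hnPa (Or.inr (h3 ▸ s.iseqv.refl a))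
            · exact hnPa (Or.inl (s.iseqv.symm
                (hnc (lt_trans hij h3) hab hbc (s.iseqv.symm hbi) hac)))
      · -- b~j, d~i
        rcases lt_trichotomy c i with h1 | h1 | h1
        · exact hnab (hnc hab hbc (lt_trans h1 hij) hac hbj)
        · exact hnPa (Or.inl (h1 ▸ hac))
        · rcases lt_trichotomy i a with h2 | h2 | h2
          · rcases lt_trichotomy a j with h3 | h3 | h3
            · exact (hadj a ⟨h2, h3⟩).elim
            · exact hnPa (Or.inr (h3 ▸ s.iseqv.refl a))
            · exact hnPa (Or.inr (s.iseqv.symm (hnc h3 hab hbc (s.iseqv.symm hbj) hac)))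
          · exact hnPa (Or.inl (h2 ▸ s.iseqv.refl a))
          · exact hnPa (Or.inl (hnc h2 h1 hcd hac (s.iseqv.symm hdi)))
      · exact hnab (hnc hab hbc hcd hac (s.iseqv.trans hbj (s.iseqv.symm hdj)))
  · rcases hbd with hbd | ⟨hPb, hPd⟩
    · -- Case 3 : a and c in the merged class, s b d
      have hnPb : ¬ (s.r b i ∨ s.r b j) := fun h => hnP ⟨hPa, h⟩
      rcases hPa with hai | haj <;> rcases hPc with hci | hcj
      · exact hnab (hnc hab hbc hcd (s.iseqv.trans hai (s.iseqv.symm hci)) hbd)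
      · -- a~i, c~j
        rcases lt_trichotomy b i with h1 | h1 | h1
        · rcases lt_trichotomy i d with h2 | h2 | h2
          · exact hnab (hnc hab h1 h2 hai hbd)
          · exact hnPb (Or.inl (h2 ▸ hbd))
          · exact hnPb (Or.inr (s.iseqv.trans
              (hnc hbc hcd (lt_trans h2 hij) hbd hcj) hcj))
        · exact hnPb (Or.inl (h1 ▸ s.iseqv.refl b))
        · rcases lt_trichotomy b j with h2 | h2 | h2
          · exact (hadj b ⟨h1, h2⟩).elim
          · exact hnPb (Or.inr (h2 ▸ s.iseqv.refl b))
          · exact hnPb (Or.inr (s.iseqv.symm (hnc h2 hbc hcd (s.iseqv.symm hcj) hbd)))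
      · -- a~j, c~i
        rcases lt_trichotomy i b with h1 | h1 | h1
        · exact hnPb (Or.inl (s.iseqv.symm (hnc h1 hbc hcd (s.iseqv.symm hci) hbd)))
        · exact hnPb (Or.inl (h1 ▸ s.iseqv.refl i))
        · rcases lt_trichotomy d i with h2 | h2 | h2
          · exact hnPb (Or.inl (s.iseqv.trans (hnc hbc hcd h2 hbd hci) hci))
          · exact hnPb (Or.inl (h2 ▸ hbd))
          · rcases lt_trichotomy j d with h3 | h3 | h3
            · exact hnab (hnc hab (lt_trans h1 hij) h3 haj hbd)
            · exact hnab (s.iseqv.trans (h3 ▸ haj) (s.iseqv.symm hbd))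
            · exact (hadj d ⟨h2, h3⟩).elim
      · exact hnab (hnc hab hbc hcd (s.iseqv.trans haj (s.iseqv.symm hcj)) hbd)
    · exact hnP ⟨hPa, hPb⟩

end Merge



section Fold

open Relation

variable [NeZero n]

/-- Successively merge adjacent pairs with equal `f`-values. -/
noncomputable def SS (ε : Setoid (Fin n)) (f : Fin n → Fin n) : ℕ → Setoid (Fin n)
  | 0 => ε
  | k + 1 =>
    if h : k + 1 < n then
      (if f ⟨k, Nat.lt_of_succ_lt h⟩ = f ⟨k + 1, h⟩ then
        mergeS (SS ε f k) ⟨k, Nat.lt_of_succ_lt h⟩ ⟨k + 1, h⟩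
      else SS ε f k)
    else SS ε f k

variable {ε : Setoid (Fin n)} {f : Fin n → Fin n}

lemma SS_le_succ {k : ℕ} {x y : Fin n} (h : (SS ε f k).r x y) : (SS ε f (k + 1)).r x y := by
  rw [SS]
  by_cases hkn : k + 1 < n
  · rw [dif_pos hkn]
    by_cases hfk : f ⟨k, Nat.lt_of_succ_lt hkn⟩ = f ⟨k + 1, hkn⟩
    · rw [if_pos hfk]
      exact mergeS_rel_self h
    · rw [if_neg hfk]
      exact h
  · rw [dif_neg hkn]
    exact h

lemma SS_le {k l : ℕ} (hkl : k ≤ l) {x y : Fin n} (h : (SS ε f k).r x y) : (SS ε f l).r x y := by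
  induction l with
  | zero => exact (Nat.le_zero.mp hkl) ▸ h
  | succ l IH =>
    rcases Nat.lt_or_ge k (l + 1) with h' | h'
    · exact SS_le_succ (IH (Nat.lt_succ_iff.mp h'))
    · exact (Nat.le_antisymm hkl h') ▸ h

lemma SS_of_eps {k : ℕ} {x y : Fin n} (h : ε.r x y) : (SS ε f k).r x y :=
  SS_le (Nat.zero_le k) h

lemma SS_ncr (hnc : NCr ε) (k : ℕ) : NCr (SS ε f k) := by
  induction k with
  | zero => exact hnc
  | succ k IH =>
    rw [SS]
    split
    · split
      · apply mergeS_ncr IH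
        · exact Fin.mk_lt_mk.mpr (Nat.lt_succ_self k)
        · intro w hw
          obtain ⟨hw1, hw2⟩ := hw
          rw [Fin.lt_def] at hw1 hw2
          simp only [Fin.val_mk] at hw1 hw2
          omega
      · exact IH
    · exact IH

lemma SS_push (k : ℕ) : ∀ {x y : Fin n}, (SS ε f k).r x y →
    (epP ε f).r (f x) (f y) := by
  induction k with
  | zero => exact fun h => epP_of_eps h
  | succ k IH =>
    intro x y h
    rw [SS] at h
    by_cases hkn : k + 1 < n
    · rw [dif_pos hkn] at h
      by_cases hfk : f ⟨k, Nat.lt_of_succ_lt hkn⟩ = f ⟨k + 1, hkn⟩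
      · rw [if_pos hfk] at h
        rcases h with h | ⟨h1, h2⟩
        · exact IH h
        · have e1 : (epP ε f).r (f x) (f ⟨k, Nat.lt_of_succ_lt hkn⟩) := by
            rcases h1 with h1 | h1
            · exact IH h1
            · exact hfk ▸ IH h1
          have e2 : (epP ε f).r (f y) (f ⟨k, Nat.lt_of_succ_lt hkn⟩) := by
            rcases h2 with h2 | h2
            · exact IH h2
            · exact hfk ▸ IH h2
          exact (epP ε f).iseqv.trans e1 ((epP ε f).iseqv.symm e2)
      · rw [if_neg hfk] at h
        exact IH h
    · rw [dif_neg hkn] at h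
      exact IH h

lemma SS_merge_pair (hf : Monotone f) {v : Fin n} (h : (v : ℕ) + 1 < n)
    (hfv : f v = f ⟨(v : ℕ) + 1, h⟩) : (SS ε f n).r v ⟨(v : ℕ) + 1, h⟩ := by
  apply SS_le (k := (v : ℕ) + 1) (by omega)
  rw [SS, dif_pos h]
  rw [if_pos (show f ⟨(v : ℕ), Nat.lt_of_succ_lt h⟩ = f ⟨(v : ℕ) + 1, h⟩ from hfv)]
  exact mergeS_rel_ij _ _ _

lemma SS_ker (hf : Monotone f) {x y : Fin n} (h : f x = f y) : (SS ε f n).r x y := by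
  suffices H : ∀ d : ℕ, ∀ x y : Fin n, x ≤ y → (y : ℕ) - (x : ℕ) = d → f x = f y →
      (SS ε f n).r x y by
    rcases le_total x y with hxy | hxy
    · exact H _ x y hxy rfl h
    · exact (SS ε f n).iseqv.symm (H _ y x hxy rfl h.symm)
  intro d
  induction d with
  | zero =>
    intro x y hxy hd _
    have hxy' : (x : ℕ) ≤ (y : ℕ) := hxy
    have : x = y := Fin.ext (by omega)
    exact this ▸ (SS ε f n).iseqv.refl x
  | succ d IH =>
    intro x y hxy hd hfxy
    have hxy' : (x : ℕ) < (y : ℕ) := by omega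
    have hx1 : (x : ℕ) + 1 < n := by
      have := y.isLt
      omega
    set x' : Fin n := ⟨(x : ℕ) + 1, hx1⟩ with hx'
    have hxx' : x ≤ x' := by
      rw [Fin.le_def]
      show (x : ℕ) ≤ (x : ℕ) + 1
      omega
    have hx'y : x' ≤ y := by
      rw [Fin.le_def]
      show (x : ℕ) + 1 ≤ (y : ℕ)
      omega
    have h1 : f x = f x' := le_antisymm (hf hxx') (hfxy ▸ hf hx'y)
    have h2 : f x' = f y := h1 ▸ hfxy
    exact (SS ε f n).iseqv.trans (SS_merge_pair hf hx1 h1)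
      (IH x' y hx'y (by show (y : ℕ) - ((x : ℕ) + 1) = d; omega) h2)

lemma SS_pull (hf : Monotone f) {y z : Fin n} (h : (epP ε f).r y z) :
    ∀ p q : Fin n, f p = y → f q = z → (SS ε f n).r p q := by
  rw [epP_rel] at h
  induction h with
  | refl =>
    intro p q hp hq
    exact SS_ker hf (hp.trans hq.symm)
  | tail h1 hstep IH =>
    intro p q hp hq
    obtain ⟨p', q', hpq', hp', hq'⟩ := hstep
    exact (SS ε f n).iseqv.trans (IH p p' hp hp')
      ((SS ε f n).iseqv.trans (SS_of_eps hpq') (SS_ker hf (hq'.trans hq.symm)))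

lemma epP_realized {y z : Fin n} (h : (epP ε f).r y z) (hne : y ≠ z) :
    ∃ p : Fin n, f p = y := by
  rw [epP_rel] at h
  rcases (ReflTransGen.cases_head h) with h' | ⟨c, hstep, _⟩
  · exact absurd h' hne
  · obtain ⟨p, q, _, hp, _⟩ := hstep
    exact ⟨p, hp⟩

lemma epP_ncr (hpl : IsPlanarEq ε) (hf : Monotone f) : NCr (epP ε f) := by
  intro y1 y2 y3 y4 h12 h23 h34 h13 h24
  obtain ⟨m1, hm1⟩ := epP_realized h13 (ne_of_lt (lt_trans h12 h23))
  obtain ⟨m3, hm3⟩ := epP_realized ((epP ε f).iseqv.symm h13)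
    (ne_of_gt (lt_trans h12 h23))
  obtain ⟨m2, hm2⟩ := epP_realized h24 (ne_of_lt (lt_trans h23 h34))
  obtain ⟨m4, hm4⟩ := epP_realized ((epP ε f).iseqv.symm h24)
    (ne_of_gt (lt_trans h23 h34))
  have hord : ∀ {u v : Fin n}, f u < f v → u < v := by
    intro u v huv
    by_contra hle
    exact absurd (hf (not_lt.mp hle)) (not_le.mpr huv)
  have o12 : m1 < m2 := hord (by rw [hm1, hm2]; exact h12)
  have o23 : m2 < m3 := hord (by rw [hm2, hm3]; exact h23)
  have o34 : m3 < m4 := hord (by rw [hm3, hm4]; exact h34)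
  have hR13 : (SS ε f n).r m1 m3 := SS_pull hf h13 m1 m3 hm1 hm3
  have hR24 : (SS ε f n).r m2 m4 := SS_pull hf h24 m2 m4 hm2 hm4
  have := SS_ncr (ε := ε) (f := f) (ncr_of_planarEq hpl) n o12 o23 o34 hR13 hR24
  have := SS_push n this
  rwa [hm1, hm2] at this

lemma epP_planar (hpl : IsPlanarEq ε) (hf : Monotone f) : IsPlanarEq (epP ε f) :=
  planarEq_of_ncr (epP_ncr hpl hf)

end Fold



section Cross

open Relation

variable [NeZero n] {ε : Setoid (Fin n)} {f : Fin n → Fin n}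

/-- If a class has a "gap" `(d₁, d₂)` avoided by the class of `d₁`, a connecting
chain must contain a single step jumping over the gap. -/
lemma chain_cross {d₁ d₂ : Fin n} (hd : (epP ε f).r d₁ d₂) (hlt : d₁ < d₂)
    (gap : ∀ e, (epP ε f).r d₁ e → ¬ (d₁ < e ∧ e < d₂)) :
    ∃ u u' : Fin n, rel0 ε f u u' ∧ u ≤ d₁ ∧ d₂ ≤ u' := by
  have main : ∀ u : Fin n, ReflTransGen (rel0 ε f) u d₂ → (epP ε f).r d₁ u → u ≤ d₁ →
      ∃ u u' : Fin n, rel0 ε f u u' ∧ u ≤ d₁ ∧ d₂ ≤ u' := by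
    intro u h
    induction h using ReflTransGen.head_induction_on with
    | refl =>
      intro _ hle
      exact absurd (lt_of_lt_of_le hlt hle) (lt_irrefl d₁)
    | @head w c hstep htail IH =>
      intro hrel hle
      have hc : (epP ε f).r d₁ c := (epP ε f).iseqv.trans hrel (epP_of_rel0 hstep)
      rcases le_or_gt c d₁ with h' | h'
      · exact IH hc h'
      · have h2 : d₂ ≤ c := by
          by_contra hcon
          exact gap c hc ⟨h', not_le.mp hcon⟩
        exact ⟨w, c, hstep, hle, h2⟩
  exact main d₁ hd ((epP ε f).iseqv.refl d₁) (le_refl d₁)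

/-- The `epP`-class of the image of an anchor is un-nested. -/
lemma epP_unnested (hpl : IsPlanarEq ε) (hf : Monotone f) (x : Fin n) :
    Unnested (epP ε f) (f (anchorBelow ε x)) := by
  have hA := anchor_spec hpl x
  have hUn : Unnested ε (anchorBelow ε x) := (mem_anchorsF.mp hA.1).1
  set A := anchorBelow ε x with hAdef
  set M := maxCl ε A with hMdef
  intro t hN
  obtain ⟨d₁, hd₁, d₂, hd₂, hlt, hcons, hall⟩ := hN
  have hz1 : d₁ < f A ∧ f A < d₂ := hall (f A) ((epP ε f).iseqv.refl _)
  have hrelAM : (epP ε f).r (f A) (f M) := epP_of_eps (rel_maxCl ε A)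
  have hz2 : d₁ < f M ∧ f M < d₂ := hall (f M) hrelAM
  have hd12 : (epP ε f).r d₁ d₂ := (epP ε f).iseqv.trans ((epP ε f).iseqv.symm hd₁) hd₂
  have gap : ∀ e, (epP ε f).r d₁ e → ¬ (d₁ < e ∧ e < d₂) := by
    intro e he
    exact hcons e ((epP ε f).iseqv.trans hd₁ he)
  obtain ⟨u, u', hstep, hu, hu'⟩ := chain_cross hd12 hlt gap
  obtain ⟨p, q, hpq, hp, hq⟩ := hstep
  have hpA : p < A := by
    by_contra hcon
    have := hf (not_lt.mp hcon)
    rw [hp] at this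
    exact absurd (lt_of_le_of_lt (le_trans this hu) hz1.1) (lt_irrefl _)
  have hqM : M < q := by
    by_contra hcon
    have := hf (not_lt.mp hcon)
    rw [hq] at this
    exact absurd (lt_of_lt_of_le hz2.2 (le_trans hu' this)) (lt_irrefl _)
  have hnrel : ¬ ε.r A p := by
    intro hrel
    have : q ≤ M := le_maxCl_of_rel (ε.iseqv.trans hrel hpq)
    exact absurd (lt_of_lt_of_le hqM this) (lt_irrefl _)
  rcases hpl A p hnrel with hs | hs | hs
  · rcases hs with hs | hs
    · exact absurd (hs A (ε.iseqv.refl A) p (ε.iseqv.refl p)) (not_lt.mpr (le_of_lt hpA))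
    · have := hs M (rel_maxCl ε A) q hpq
      exact absurd (lt_trans hqM this) (lt_irrefl _)
  · exact hUn p hs
  · obtain ⟨g₁, hg₁, g₂, hg₂, hglt, hgcons, hgall⟩ := hs
    have h1 : A ≤ g₁ := by
      have := minCl_le_of_rel hg₁
      rwa [(mem_anchorsF.mp hA.1).2] at this
    have h2 : g₁ < p := (hgall p (ε.iseqv.refl p)).1
    exact absurd (lt_of_le_of_lt h1 (lt_trans h2 hpA)) (lt_irrefl _)

/-- Key anchor-transport identity for `f · d` versus `d · f`. -/
lemma anchor_push (hpl : IsPlanarEq ε) (hf : Monotone f) (x : Fin n) :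
    anchorBelow (epP ε f) (f x) = minCl (epP ε f) (f (anchorBelow ε x)) := by
  have hpl' : IsPlanarEq (epP ε f) := epP_planar hpl hf
  have hA := anchor_spec hpl x
  set A := anchorBelow ε x with hAdef
  set c := minCl (epP ε f) (f A) with hcdef
  have hrelc : (epP ε f).r (f A) c := rel_minCl _ _
  have hcanch : c ∈ anchorsF (epP ε f) := by
    rw [mem_anchorsF]
    exact ⟨unnested_congr hrelc (epP_unnested hpl hf x), minCl_idem _ _⟩
  have h1 : c ≤ f x := le_trans (minCl_le _ _) (hf hA.2.1)
  have h2 : f x ≤ maxCl (epP ε f) c := by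
    have e1 : f x ≤ f (maxCl ε A) := hf hA.2.2
    have e2 : (epP ε f).r c (f (maxCl ε A)) :=
      (epP ε f).iseqv.trans ((epP ε f).iseqv.symm hrelc) (epP_of_eps (rel_maxCl ε A))
    exact le_trans e1 (le_maxCl_of_rel e2)
  exact anchorBelow_eq hpl' hcanch h1 h2

/-- **(A1)**: `d_ε · f = f · d_{f(ε)}`. -/
lemma dEta_comm (hpl : IsPlanarEq ε) (hf : Monotone f) :
    pmul (dEta ε) (toPtn f) = pmul (toPtn f) (dEta (epP ε f)) := by
  rw [pmul_toPtn_dEta]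
  apply Setoid.ext
  rintro (x | y) (x' | y')
  · rw [a_inl_inl_iff hpl]
    show _ ↔ anchorBelow (epP ε f) (f x) = anchorBelow (epP ε f) (f x')
    rw [anchor_push hpl hf, anchor_push hpl hf, minCl_eq_iff]
  · rw [a_inl_inr_iff hpl]
    show _ ↔ anchorBelow (epP ε f) (f x) = minCl (epP ε f) y'
    rw [anchor_push hpl hf, minCl_eq_iff]
  · constructor
    · intro h
      have h2 := (a_inl_inr_iff hpl (x := x') (y := y)).mp
        ((pmul (dEta ε) (toPtn f)).iseqv.symm h)
      show minCl (epP ε f) y = anchorBelow (epP ε f) (f x')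
      rw [anchor_push hpl hf]
      exact minCl_eq_iff.mpr ((epP ε f).iseqv.symm h2)
    · intro h
      apply (pmul (dEta ε) (toPtn f)).iseqv.symm
      rw [a_inl_inr_iff hpl]
      have h' : minCl (epP ε f) y = minCl (epP ε f) (f (anchorBelow ε x')) := by
        rw [← anchor_push hpl hf]
        exact h
      exact (epP ε f).iseqv.symm (minCl_eq_iff.mp h')
  · show (cokerP (pmul (dEta ε) (toPtn f))).r y y' ↔ minCl (epP ε f) y = minCl (epP ε f) y'
    rw [coker_dEta_toPtn hpl, minCl_eq_iff]

end Cross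



section PartTwo

variable [NeZero n]

lemma coker_ncr {a : Ptn n} (hpl : Planar a) : NCr (cokerP a) := by
  intro y1 y2 y3 y4 h12 h23 h34 h13 h24
  have o1 : ordV (Sum.inr y4 : V n) < ordV (Sum.inr y3 : V n) := by
    show 2 * n - 1 - (y4 : ℕ) < 2 * n - 1 - (y3 : ℕ)
    have := y4.isLt
    have h34' : (y3 : ℕ) < (y4 : ℕ) := h34
    omega
  have o2 : ordV (Sum.inr y3 : V n) < ordV (Sum.inr y2 : V n) := by
    show 2 * n - 1 - (y3 : ℕ) < 2 * n - 1 - (y2 : ℕ)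
    have := y3.isLt
    have h23' : (y2 : ℕ) < (y3 : ℕ) := h23
    omega
  have o3 : ordV (Sum.inr y2 : V n) < ordV (Sum.inr y1 : V n) := by
    show 2 * n - 1 - (y2 : ℕ) < 2 * n - 1 - (y1 : ℕ)
    have := y2.isLt
    have h12' : (y1 : ℕ) < (y2 : ℕ) := h12
    omega
  have e1 : a.r (Sum.inr y4) (Sum.inr y2) := (cokerP a).iseqv.symm h24
  have e2 : a.r (Sum.inr y3) (Sum.inr y1) := (cokerP a).iseqv.symm h13
  have := hpl _ _ _ _ o1 o2 o3 e1 e2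
  have h34c : (cokerP a).r y3 y4 := (cokerP a).iseqv.symm this
  exact (cokerP a).iseqv.trans h13 ((cokerP a).iseqv.trans h34c ((cokerP a).iseqv.symm h24))

lemma part2 {a : Ptn n} (ha : a ∈ PPfd n) :
    IsPlanarEq (cokerP a) ∧
      ∃ f : Fin n → Fin n, Monotone f ∧ a = pmul (toPtn f) (dEta (cokerP a)) := by
  obtain ⟨hfd, hpl⟩ := ha
  have hplE : IsPlanarEq (cokerP a) := planarEq_of_ncr (coker_ncr hpl)
  set ε := cokerP a with hedef
  -- the transversal map
  set F : Fin n → Fin n := fun x => minCl ε (hfd x).choose with hFdef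
  have hF : ∀ x, a.r (Sum.inl x) (Sum.inr (F x)) := by
    intro x
    exact a.iseqv.trans (hfd x).choose_spec
      (show ε.r (hfd x).choose (F x) from rel_minCl ε (hfd x).choose)
  have minCl_F : ∀ x, minCl ε (F x) = F x := fun x => minCl_idem ε _
  have char_ul : ∀ x y, a.r (Sum.inl x) (Sum.inr y) ↔ F x = minCl ε y := by
    intro x y
    constructor
    · intro h
      have h2 : ε.r (F x) y := a.iseqv.trans (a.iseqv.symm (hF x)) h
      rw [← minCl_F x]
      exact minCl_congr h2
    · intro h
      have h2 : ε.r (F x) y := by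
        rw [← minCl_F x] at h
        exact minCl_eq_iff.mp h
      exact a.iseqv.trans (hF x) h2
  have char_uu : ∀ x x', a.r (Sum.inl x) (Sum.inl x') ↔ F x = F x' := by
    intro x x'
    constructor
    · intro h
      have := (char_ul x (F x')).mp (a.iseqv.trans h (hF x'))
      rwa [minCl_F] at this
    · intro h
      exact a.iseqv.trans ((char_ul x (F x')).mpr (by rw [h, minCl_F]))
        (a.iseqv.symm (hF x'))
  have hmono : Monotone F := by
    intro x x' hle
    rcases eq_or_lt_of_le hle with h | h
    · exact h ▸ le_refl _
    by_contra hcon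
    have hFF : F x' < F x := not_le.mp hcon
    have o1 : ordV (Sum.inl x : V n) < ordV (Sum.inl x' : V n) := h
    have o2 : ordV (Sum.inl x' : V n) < ordV (Sum.inr (F x) : V n) := by
      show (x' : ℕ) < 2 * n - 1 - (F x : ℕ)
      have := x'.isLt
      have := (F x).isLt
      omega
    have o3 : ordV (Sum.inr (F x) : V n) < ordV (Sum.inr (F x') : V n) := by
      show 2 * n - 1 - (F x : ℕ) < 2 * n - 1 - (F x' : ℕ)
      have := (F x).isLt
      have hFF' : (F x' : ℕ) < (F x : ℕ) := hFF
      omega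
    have := hpl _ _ _ _ o1 o2 o3 (hF x) (hF x')
    exact absurd ((char_uu x x').mp this ▸ hFF) (lt_irrefl _)
  have hUn : ∀ x, Unnested ε (F x) := by
    intro x t hN
    obtain ⟨d₁, hd₁, d₂, hd₂, hlt, hcons, hall⟩ := hN
    have hz : d₁ < F x ∧ F x < d₂ := hall (F x) (ε.iseqv.refl _)
    have o1 : ordV (Sum.inl x : V n) < ordV (Sum.inr d₂ : V n) := by
      show (x : ℕ) < 2 * n - 1 - (d₂ : ℕ)
      have := x.isLt
      have := d₂.isLt
      omega
    have o2 : ordV (Sum.inr d₂ : V n) < ordV (Sum.inr (F x) : V n) := by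
      show 2 * n - 1 - (d₂ : ℕ) < 2 * n - 1 - (F x : ℕ)
      have := d₂.isLt
      have hz2 : (F x : ℕ) < (d₂ : ℕ) := hz.2
      omega
    have o3 : ordV (Sum.inr (F x) : V n) < ordV (Sum.inr d₁ : V n) := by
      show 2 * n - 1 - (F x : ℕ) < 2 * n - 1 - (d₁ : ℕ)
      have := (F x).isLt
      have hz1 : (d₁ : ℕ) < (F x : ℕ) := hz.1
      omega
    have e2 : a.r (Sum.inr d₂) (Sum.inr d₁) := ε.iseqv.trans (ε.iseqv.symm hd₂) hd₁
    have := hpl _ _ _ _ o1 o2 o3 (hF x) e2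
    have h2 : ε.r (F x) d₂ := by
      have h3 := (char_ul x d₂).mp this
      rw [← minCl_F x] at h3
      exact minCl_eq_iff.mp h3
    exact absurd (hall d₂ h2).2 (lt_irrefl _)
  have anchorF : ∀ x, anchorBelow ε (F x) = F x := by
    intro x
    exact anchorBelow_eq hplE (mem_anchorsF.mpr ⟨hUn x, minCl_F x⟩)
      (le_refl _) (le_maxCl ε (F x))
  refine ⟨hplE, F, hmono, ?_⟩
  rw [pmul_toPtn_dEta]
  apply Setoid.ext
  rintro (x | y) (x' | y')
  · rw [char_uu]
    show _ ↔ anchorBelow ε (F x) = anchorBelow ε (F x')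
    rw [anchorF, anchorF]
  · rw [char_ul]
    show _ ↔ anchorBelow ε (F x) = minCl ε y'
    rw [anchorF]
  · constructor
    · intro h
      have := (char_ul x' y).mp (a.iseqv.symm h)
      show minCl ε y = anchorBelow ε (F x')
      rw [anchorF]
      exact this.symm
    · intro h
      replace h : minCl ε y = anchorBelow ε (F x') := h
      rw [anchorF] at h
      exact a.iseqv.symm ((char_ul x' y).mpr h.symm)
  · show ε.r y y' ↔ minCl ε y = minCl ε y'
    rw [minCl_eq_iff]

end PartTwo




/-- Proposition `prop:DnOn`.  With `O_n` the order-preserving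
transformations (the planar transformations), viewed inside `PP_n^fd`:
(1) `(D_n, O_n)` is a strong right action pair in `PP_n^fd`:
    (A1) `D_n f ⊆ f D_n` for `f ∈ O_n`; (A2) `fu = gv ⟹ u = v` for `u,v ∈ D_n`,
    `f,g ∈ O_n`;
(2) `PP_n^fd = O_n D_n`: every `a ∈ PP_n^fd` is `a = f d_η` with `f ∈ O_n` and
    `η = coker a` (a planar equivalence). -/
theorem stmt18 (n : ℕ) (hn : 2 ≤ n) [NeZero n] :
    (∀ f : Fin n → Fin n, Monotone f → ∀ u ∈ DSet n,
      ∃ v ∈ DSet n, pmul u (toPtn f) = pmul (toPtn f) v) ∧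
    (∀ u ∈ DSet n, ∀ v ∈ DSet n, ∀ f g : Fin n → Fin n, Monotone f → Monotone g →
      pmul (toPtn f) u = pmul (toPtn g) v → u = v) ∧
    (∀ a ∈ PPfd n, IsPlanarEq (cokerP a) ∧
      ∃ f : Fin n → Fin n, Monotone f ∧ a = pmul (toPtn f) (dEta (cokerP a))) := by
  refine ⟨?_, ?_, ?_⟩
  · rintro f hf u ⟨ε, hpl, rfl⟩
    exact ⟨dEta (epP ε f), ⟨epP ε f, epP_planar hpl hf, rfl⟩, dEta_comm hpl hf⟩
  · rintro u ⟨ε₁, hpl₁, rfl⟩ v ⟨ε₂, hpl₂, rfl⟩ f g hf hg heq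
    rw [pmul_toPtn_dEta, pmul_toPtn_dEta] at heq
    have hset : ε₁ = ε₂ := by
      apply Setoid.ext
      intro y y'
      have h2 := Setoid.ext_iff.mp heq (Sum.inr y) (Sum.inr y')
      have h3 : minCl ε₁ y = minCl ε₁ y' ↔ minCl ε₂ y = minCl ε₂ y' := h2
      rw [minCl_eq_iff, minCl_eq_iff] at h3
      exact h3
    rw [hset]
  · intro a ha
    exact part2 ha

end PaperFDP
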